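/- Let A be a unital C*-algebra, let Φ : A → A be a unital completely positive linear map, and let a ∈ A. Then the following are equivalent: (i) Φ(a) = a, Φ(a*a) = a*a, and Φ(aa*) = aa*; (ii) Φ(a) = a and, for all x ∈ A, Φ(ax) = aΦ(x) and Φ(xa) = Φ(x)a; (iii) Φ(b) = b for all b ∈ C*(1,a). -/

import Mathlib

open scoped Matrix

/-- A map between star rings is *completely positive* if, for every `n`, applying it
entrywise to `n × n` matrices sends positive elements (i.e. those of the form `Nᴴ * N`)
of the matrix ring over the domain to positive elements of the matrix ring over the
codomain. -/
def CompletelyPositive {A B : Type*} [NonUnitalNonAssocSemiring A] [StarRing A]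
    [NonUnitalNonAssocSemiring B] [StarRing B] (Φ : A → B) : Prop :=
  ∀ n : ℕ, ∀ M : Matrix (Fin n) (Fin n) A,
    (∃ N : Matrix (Fin n) (Fin n) A, M = Nᴴ * N) →
      ∃ P : Matrix (Fin n) (Fin n) B, M.map Φ = Pᴴ * P

section Aux

set_option linter.unusedSectionVars false

variable {A : Type*} [NormedRing A] [StarRing A] [CStarRing A] [CompleteSpace A]
    [NormedAlgebra ℂ A] [StarModule ℂ A]

private lemma quad_sum {n : ℕ} (P : Matrix (Fin n) (Fin n) A) (c d : Fin n → A) :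
    ∑ i, ∑ j, star (c i) * ((Pᴴ * P) i j * d j) =
      ∑ k, star (P.mulVec c k) * P.mulVec d k := by
  simp only [Matrix.mul_apply, Matrix.mulVec, dotProduct,
    Matrix.conjTranspose_apply, star_sum, star_mul, Finset.sum_mul, Finset.mul_sum, mul_assoc]
  calc ∑ i, ∑ j, ∑ k, star (c i) * (star (P k i) * (P k j * d j))
      = ∑ i, ∑ k, ∑ j, star (c i) * (star (P k i) * (P k j * d j)) :=
        Finset.sum_congr rfl fun _ _ => Finset.sum_comm
    _ = ∑ k, ∑ i, ∑ j, star (c i) * (star (P k i) * (P k j * d j)) := Finset.sum_comm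
    _ = ∑ k, ∑ j, ∑ i, star (c i) * (star (P k i) * (P k j * d j)) :=
        Finset.sum_congr rfl fun _ _ => Finset.sum_comm

private lemma cp_star (Φ : A →ₗ[ℂ] A) (hcp : CompletelyPositive ⇑Φ) (x : A) :
    Φ (star x) = star (Φ x) := by
  set v : Fin 2 → A := ![x, 1] with hv
  set N : Matrix (Fin 2) (Fin 2) A := Matrix.of fun i j => if i = 0 then v j else 0 with hN
  obtain ⟨P, hP⟩ := hcp 2 (Nᴴ * N) ⟨N, rfl⟩
  have hsa : ((Nᴴ * N).map ⇑Φ)ᴴ = (Nᴴ * N).map ⇑Φ := by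
    rw [hP]; simp [Matrix.conjTranspose_mul]
  have h01 := congrFun (congrFun hsa 0) 1
  simp [Matrix.conjTranspose_apply, Matrix.map_apply, Matrix.mul_apply, Fin.sum_univ_two,
    hN, hv] at h01
  exact h01.symm

private lemma cp_pos (Φ : A →ₗ[ℂ] A) (hcp : CompletelyPositive ⇑Φ) (w : A) :
    ∃ p : A, Φ (star w * w) = star p * p := by
  set N : Matrix (Fin 1) (Fin 1) A := Matrix.of fun _ _ => w with hN
  obtain ⟨P, hP⟩ := hcp 1 (Nᴴ * N) ⟨N, rfl⟩
  refine ⟨P 0 0, ?_⟩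
  have := congrFun (congrFun hP 0) 0
  simpa [Matrix.mul_apply, Matrix.map_apply, Matrix.conjTranspose_apply, hN] using this

private lemma cp_key (Φ : A →ₗ[ℂ] A) (hunital : Φ 1 = 1) (hcp : CompletelyPositive ⇑Φ)
    (a : A) (ha : Φ a = a) (hsa : Φ (star a) = star a)
    (haa : Φ (star a * a) = star a * a) (y : A) :
    Φ (star a * y) = star a * Φ y := by
  letI : CStarAlgebra A := ⟨⟩
  letI := CStarAlgebra.spectralOrder A
  haveI := CStarAlgebra.spectralOrderedRing A
  set v : Fin 3 → A := ![a, y, 1] with hv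
  set N : Matrix (Fin 3) (Fin 3) A := Matrix.of fun i j => if i = 0 then v j else 0 with hN
  obtain ⟨P, hP⟩ := hcp 3 (Nᴴ * N) ⟨N, rfl⟩
  have hQ : ∀ i j, (Pᴴ * P) i j = Φ (star (v i) * v j) := by
    intro i j
    rw [← hP]
    simp [Matrix.map_apply, Matrix.mul_apply, Fin.sum_univ_three, hN]
  set c : Fin 3 → A := ![1, 0, -a] with hc
  have h0 : ∑ k, star (P.mulVec c k) * P.mulVec c k = 0 := by
    rw [← quad_sum]
    simp only [hQ]
    simp [Fin.sum_univ_three, hc, hv, ha, hsa, haa, hunital, mul_one, one_mul, star_one,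
      star_neg, mul_neg, neg_mul, neg_neg, map_neg]
  have hw : ∀ k, P.mulVec c k = 0 := by
    intro k
    rw [← CStarRing.star_mul_self_eq_zero_iff]
    exact (Finset.sum_eq_zero_iff_of_nonneg fun i _ => star_mul_self_nonneg _).mp h0 k
      (Finset.mem_univ k)
  set d : Fin 3 → A := ![0, 1, 0] with hd
  have hT : ∑ i, ∑ j, star (c i) * ((Pᴴ * P) i j * d j) = 0 := by
    rw [quad_sum]
    exact Finset.sum_eq_zero fun k _ => by rw [hw k]; simp
  rw [← sub_eq_zero, ← hT]
  simp only [hQ]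
  simp [Fin.sum_univ_three, hc, hv, hd, ha, hsa, haa, hunital]
  abel

end Aux

/-- **Theorem 2.6.** Let `A` be a unital C*-algebra, `Φ : A → A` a unital completely
positive linear map, and `a ∈ A`. The following are equivalent:
(i) `Φ(a) = a`, `Φ(a*a) = a*a` and `Φ(aa*) = aa*`;
(ii) `Φ(a) = a` and, for all `x ∈ A`, `Φ(ax) = aΦ(x)` and `Φ(xa) = Φ(x)a`;
(iii) `Φ(b) = b` for all `b ∈ C*(1,a)`. -/
theorem propagation_of_fixed_points_cp {A : Type*}
    [NormedRing A] [StarRing A] [CStarRing A] [CompleteSpace A]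
    [NormedAlgebra ℂ A] [StarModule ℂ A]
    (Φ : A →ₗ[ℂ] A) (hunital : Φ 1 = 1) (hcp : CompletelyPositive (⇑Φ)) (a : A) :
    List.TFAE
      [Φ a = a ∧ Φ (star a * a) = star a * a ∧ Φ (a * star a) = a * star a,
       Φ a = a ∧ ∀ x : A, Φ (a * x) = a * Φ x ∧ Φ (x * a) = Φ x * a,
       ∀ b ∈ StarAlgebra.elemental ℂ a, Φ b = b] := by
  have hstar : ∀ x : A, Φ (star x) = star (Φ x) := cp_star Φ hcp
  tfae_have 1 → 2 := by
    rintro ⟨ha, haa, haa'⟩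
    have hsa : Φ (star a) = star a := by rw [hstar, ha]
    have h1 : ∀ y, Φ (star a * y) = star a * Φ y := cp_key Φ hunital hcp a ha hsa haa
    have h2 : ∀ y, Φ (a * y) = a * Φ y := by
      intro y
      have := cp_key Φ hunital hcp (star a) hsa (by rwa [star_star]) (by rwa [star_star]) y
      rwa [star_star] at this
    refine ⟨ha, fun x => ⟨h2 x, ?_⟩⟩
    calc Φ (x * a) = star (Φ (star (x * a))) := by rw [hstar, star_star]
      _ = star (Φ (star a * star x)) := by rw [star_mul]
      _ = star (star a * Φ (star x)) := by rw [h1]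
      _ = star (Φ (star x)) * a := by rw [star_mul, star_star]
      _ = Φ x * a := by rw [← hstar, star_star]
  tfae_have 2 → 3 := by
    rintro ⟨ha, hmul⟩
    rcases subsingleton_or_nontrivial A with hsub | hnt
    · exact fun b _ => Subsingleton.elim _ _
    letI : CStarAlgebra A := ⟨⟩
    letI := CStarAlgebra.spectralOrder A
    haveI := CStarAlgebra.spectralOrderedRing A
    -- Φ is positive
    have hpos : ∀ z : A, 0 ≤ z → 0 ≤ Φ z := by
      intro z hz
      rw [StarOrderedRing.nonneg_iff] at hz
      induction hz using AddSubmonoid.closure_induction with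
      | mem x hx =>
        obtain ⟨w, rfl⟩ := hx
        obtain ⟨p, hp⟩ := cp_pos Φ hcp w
        rw [hp]
        exact star_mul_self_nonneg p
      | zero => simp
      | add x y _ _ hx hy => rw [map_add]; exact add_nonneg hx hy
    have hmono : ∀ x y : A, x ≤ y → Φ x ≤ Φ y := by
      intro x y h
      have := hpos (y - x) (sub_nonneg.mpr h)
      rw [map_sub] at this
      exact sub_nonneg.mp this
    have hΦalg : ∀ r : ℝ, Φ (algebraMap ℝ A r) = algebraMap ℝ A r := by
      intro r
      rw [IsScalarTower.algebraMap_apply ℝ ℂ A, Algebra.algebraMap_eq_smul_one, map_smul,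
        hunital]
    -- bound on selfadjoint elements
    have hsabd : ∀ h : A, IsSelfAdjoint h → ‖Φ h‖ ≤ 3 * ‖h‖ := by
      intro h hh
      have h1 : h ≤ algebraMap ℝ A ‖h‖ := hh.le_algebraMap_norm_self
      have h2 : (0 : A) ≤ h + algebraMap ℝ A ‖h‖ := by
        have h3 := hh.neg.le_algebraMap_norm_self
        rw [norm_neg] at h3
        have h4 := add_le_add_left h3 h
        rw [neg_add_cancel, add_comm] at h4
        exact h4
      have hub : Φ h ≤ algebraMap ℝ A ‖h‖ := by
        have := hmono _ _ h1; rwa [hΦalg] at this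
      have hnn : (0 : A) ≤ Φ h + algebraMap ℝ A ‖h‖ := by
        have := hpos _ h2
        rwa [map_add, hΦalg] at this
      have hle : Φ h + algebraMap ℝ A ‖h‖ ≤ algebraMap ℝ A (2 * ‖h‖) := by
        rw [two_mul, map_add]
        exact add_le_add_left hub _
      have hnorm : ‖Φ h + algebraMap ℝ A ‖h‖‖ ≤ 2 * ‖h‖ :=
        (CStarAlgebra.norm_le_iff_le_algebraMap _ (by positivity) hnn).mpr hle
      have : ‖Φ h‖ ≤ ‖Φ h + algebraMap ℝ A ‖h‖‖ + ‖algebraMap ℝ A ‖h‖‖ := by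
        simpa using norm_sub_le (Φ h + algebraMap ℝ A ‖h‖) (algebraMap ℝ A ‖h‖)
      have halg : ‖algebraMap ℝ A ‖h‖‖ = ‖h‖ := by
        rw [norm_algebraMap']
        exact norm_norm h
      linarith
    -- global bound
    have hbd : ∀ x : A, ‖Φ x‖ ≤ 6 * ‖x‖ := by
      intro x
      set h : A := x + star x with hh'
      set k : A := Complex.I • (star x - x) with hk'
      have hh : IsSelfAdjoint h := by
        rw [IsSelfAdjoint, hh', star_add, star_star, add_comm]
      have hk : IsSelfAdjoint k := by
        rw [IsSelfAdjoint, hk', star_smul, star_sub, star_star, Complex.star_def,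
          Complex.conj_I, neg_smul, smul_sub, smul_sub, neg_sub]
      have hx : x = (2 : ℂ)⁻¹ • (h + Complex.I • k) := by
        rw [hh', hk', smul_smul, Complex.I_mul_I, neg_one_smul]
        rw [show x + star x + -(star x - x) = (2:ℂ) • x by
          push_cast [two_smul]; abel]
        rw [smul_smul]
        norm_num
      have hnh : ‖h‖ ≤ 2 * ‖x‖ := by
        calc ‖h‖ ≤ ‖x‖ + ‖star x‖ := norm_add_le _ _
          _ = 2 * ‖x‖ := by rw [norm_star]; ring
      have hnk : ‖k‖ ≤ 2 * ‖x‖ := by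
        rw [hk', norm_smul, Complex.norm_I, one_mul]
        calc ‖star x - x‖ ≤ ‖star x‖ + ‖x‖ := norm_sub_le _ _
          _ = 2 * ‖x‖ := by rw [norm_star]; ring
      calc ‖Φ x‖ = ‖(2 : ℂ)⁻¹ • (Φ h + Complex.I • Φ k)‖ := by
            rw [hx, map_smul, map_add, map_smul]
        _ = 2⁻¹ * ‖Φ h + Complex.I • Φ k‖ := by
            rw [norm_smul]; norm_num
        _ ≤ 2⁻¹ * (‖Φ h‖ + ‖Φ k‖) := by
            have : ‖Φ h + Complex.I • Φ k‖ ≤ ‖Φ h‖ + ‖Complex.I • Φ k‖ := norm_add_le _ _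
            rw [norm_smul, Complex.norm_I, one_mul] at this
            linarith
        _ ≤ 6 * ‖x‖ := by
            have := hsabd h hh
            have := hsabd k hk
            linarith
    have hcont : Continuous Φ := AddMonoidHomClass.continuous_of_bound Φ 6 hbd
    classical
    have hclosed : IsClosed {b : A | Φ b = b ∧ (∀ x, Φ (b * x) = b * Φ x) ∧
        (∀ x, Φ (x * b) = Φ x * b)} := by
      have heq : {b : A | Φ b = b ∧ (∀ x, Φ (b * x) = b * Φ x) ∧
          (∀ x, Φ (x * b) = Φ x * b)} = {b | Φ b = b} ∩
          ((⋂ x : A, {b | Φ (b * x) = b * Φ x}) ∩ ⋂ x : A, {b | Φ (x * b) = Φ x * b}) := by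
        ext b
        simp only [Set.mem_inter_iff, Set.mem_iInter, Set.mem_setOf_eq]
      rw [heq]
      refine (isClosed_eq hcont continuous_id).inter (IsClosed.inter ?_ ?_)
      · exact isClosed_iInter fun x =>
          isClosed_eq (hcont.comp (continuous_mul_right x)) (continuous_mul_right (Φ x))
      · exact isClosed_iInter fun x =>
          isClosed_eq (hcont.comp (continuous_mul_left x)) (continuous_mul_left (Φ x))
    let S : StarSubalgebra ℂ A :=
      { carrier := {b | Φ b = b ∧ (∀ x, Φ (b * x) = b * Φ x) ∧ (∀ x, Φ (x * b) = Φ x * b)}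
        mul_mem' := by
          rintro b c ⟨hb, hbl, hbr⟩ ⟨hc, hcl, hcr⟩
          refine ⟨by rw [hbl c, hc], fun x => ?_, fun x => ?_⟩
          · rw [mul_assoc, hbl, hcl, mul_assoc]
          · rw [← mul_assoc, hcr, hbr, mul_assoc]
        add_mem' := by
          rintro b c ⟨hb, hbl, hbr⟩ ⟨hc, hcl, hcr⟩
          refine ⟨by rw [map_add, hb, hc], fun x => ?_, fun x => ?_⟩
          · rw [add_mul, map_add, hbl, hcl, add_mul]
          · rw [mul_add, map_add, hbr, hcr, mul_add]
        algebraMap_mem' := by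
          intro r
          refine ⟨?_, fun x => ?_, fun x => ?_⟩
          · rw [Algebra.algebraMap_eq_smul_one, map_smul, hunital]
          · rw [Algebra.algebraMap_eq_smul_one, smul_mul_assoc, one_mul, map_smul,
              smul_mul_assoc, one_mul]
          · rw [Algebra.algebraMap_eq_smul_one, mul_smul_comm, mul_one, map_smul,
              mul_smul_comm, mul_one]
        star_mem' := by
          rintro b ⟨hb, hbl, hbr⟩
          refine ⟨by rw [hstar, hb], fun x => ?_, fun x => ?_⟩
          · rw [show star b * x = star (star x * b) by simp [star_mul], hstar, hbr,
              star_mul, ← hstar, star_star]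
          · rw [show x * star b = star (b * star x) by simp [star_mul], hstar, hbl,
              star_mul, ← hstar, star_star] }
    have haS : a ∈ S := ⟨ha, fun x => (hmul x).1, fun x => (hmul x).2⟩
    intro b hb
    exact (StarAlgebra.elemental.le_of_mem (S := S) hclosed haS hb).1
  tfae_have 3 → 1 := by
    intro h
    exact ⟨h a (StarAlgebra.elemental.self_mem ℂ a),
      h _ (mul_mem (star_mem (StarAlgebra.elemental.self_mem ℂ a))
        (StarAlgebra.elemental.self_mem ℂ a)),
      h _ (mul_mem (StarAlgebra.elemental.self_mem ℂ a)
        (star_mem (StarAlgebra.elemental.self_mem ℂ a)))⟩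
  tfae_finish
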